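/- Let 0 < ρ ≤ 1, k ≥ 3, Z = Σ_{s=0}^{k-2} ρ^s. For integers 0 ≤ i, j ≤ k-2, define Δ(i,j) = Σ_{s=0}^{j-1} ρ^s/Z + (ρ^j/Z)·Σ_{s=i}^{k-2} ρ^s/Z − Σ_{s=k-1-j}^{k-2} ρ^s/Z − (ρ^{k-2-j}/Z)·Σ_{s=0}^{k-2-i} ρ^s/Z. Then Δ(i,j) ≥ 0. -/

import Mathlib

open Real Finset

noncomputable def Gg (x : ℝ) (n : ℕ) : ℝ := ∑ s ∈ Finset.range n, x ^ s

lemma Gg_nonneg (x : ℝ) (hx : 0 ≤ x) (n : ℕ) : 0 ≤ Gg x n :=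
  Finset.sum_nonneg fun s _ => pow_nonneg hx s

lemma Gg_succ (x : ℝ) (n : ℕ) : Gg x (n + 1) = Gg x n + x ^ n :=
  Finset.sum_range_succ _ _

lemma Gg_add (x : ℝ) (p q : ℕ) : Gg x (p + q) = Gg x p + x ^ p * Gg x q := by
  induction q with
  | zero => simp [Gg]
  | succ q ih =>
    rw [show p + (q + 1) = (p + q) + 1 by ring, Gg_succ, ih, Gg_succ, pow_add]
    ring

lemma Gg_mono (x : ℝ) (hx : 0 ≤ x) {m n : ℕ} (h : m ≤ n) : Gg x m ≤ Gg x n := by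
  obtain ⟨d, rfl⟩ := Nat.exists_eq_add_of_le h
  rw [Gg_add]
  have := mul_nonneg (pow_nonneg hx m) (Gg_nonneg x hx d)
  linarith

lemma Gg_one_sub (x : ℝ) (n : ℕ) : 1 - x ^ n = (1 - x) * Gg x n := by
  have h := geom_sum_mul x n
  unfold Gg
  linear_combination h

lemma Gg_L (x : ℝ) (hx : 0 ≤ x) {a b : ℕ} (hab : a ≤ b) :
    Gg x a * Gg x (b + 1) ≤ Gg x (a + 1) * Gg x b := by
  have hb : Gg x b = Gg x (b - a) + x ^ (b - a) * Gg x a := by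
    conv_lhs => rw [show b = (b - a) + a by omega]
    exact Gg_add x (b - a) a
  have hpow : x ^ a * x ^ (b - a) = x ^ b := by rw [← pow_add]; congr 1; omega
  have key : Gg x (a + 1) * Gg x b - Gg x a * Gg x (b + 1) = x ^ a * Gg x (b - a) := by
    rw [Gg_succ, Gg_succ, hb]
    linear_combination (Gg x a) * hpow
  nlinarith [mul_nonneg (pow_nonneg hx a) (Gg_nonneg x hx (b - a))]

lemma Gg_pair (x : ℝ) (hx : 0 ≤ x) (j : ℕ) :
    ∀ c ≤ j, Gg x (j - c) * Gg x (j + 1 + c) ≤ Gg x j * Gg x (j + 1) := by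
  intro c
  induction c with
  | zero => intro _; simp
  | succ c ih =>
    intro hc
    have h1 := ih (by omega)
    have h2 : Gg x (j - (c + 1)) * Gg x (j + 1 + (c + 1)) ≤ Gg x (j - c) * Gg x (j + 1 + c) := by
      have h := Gg_L x hx (a := j - (c + 1)) (b := j + 1 + c) (by omega)
      rw [show j - (c + 1) + 1 = j - c by omega] at h
      rw [show j + 1 + (c + 1) = (j + 1 + c) + 1 by omega]
      exact h
    linarith

lemma Gg_pairsum (x : ℝ) (hx : 0 ≤ x) {u m j : ℕ} (h : u + m = 2 * j + 1) :
    Gg x u * Gg x m ≤ Gg x j * Gg x (j + 1) := by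
  rcases le_or_gt u j with hu | hu
  · have key := Gg_pair x hx j (j - u) (by omega)
    rw [show j - (j - u) = u by omega, show j + 1 + (j - u) = m by omega] at key
    exact key
  · have key := Gg_pair x hx j (j - m) (by omega)
    rw [show j - (j - m) = m by omega, show j + 1 + (j - m) = u by omega] at key
    rw [mul_comm]
    exact key

theorem stmt13 (k : ℕ) (hk : 3 ≤ k) (ρ : ℝ) (hρ : 0 < ρ) (hρ1 : ρ ≤ 1)
    (Z : ℝ) (hZ : Z = ∑ s ∈ Finset.range (k - 1), ρ ^ s)
    (i j : ℕ) (hi : i ≤ k - 2) (hj : j ≤ k - 2) :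
    0 ≤ (∑ s ∈ Finset.range j, ρ ^ s / Z)
        + (ρ ^ j / Z) * ∑ s ∈ Finset.Icc i (k - 2), ρ ^ s / Z
        - (∑ s ∈ Finset.Icc (k - 1 - j) (k - 2), ρ ^ s / Z)
        - (ρ ^ (k - 2 - j) / Z) * ∑ s ∈ Finset.range (k - 1 - i), ρ ^ s / Z := by
  have hk2 : k - 2 + 1 = k - 1 := by omega
  have hik : i ≤ k - 1 := by omega
  have hjk : k - 1 - j ≤ k - 1 := by omega
  rw [show Finset.Icc i (k - 2) = Finset.Ico i (k - 1) by
        rw [← Finset.Ico_add_one_right_eq_Icc, hk2],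
      show Finset.Icc (k - 1 - j) (k - 2) = Finset.Ico (k - 1 - j) (k - 1) by
        rw [← Finset.Ico_add_one_right_eq_Icc, hk2]]
  rw [← Finset.sum_div, ← Finset.sum_div, ← Finset.sum_div, ← Finset.sum_div]
  rw [Finset.sum_Ico_eq_sub _ hik, Finset.sum_Ico_eq_sub _ hjk]
  rw [← hZ]
  have hZ0 : 0 < Z := by
    rw [hZ]
    apply Finset.sum_pos (fun s _ => pow_pos hρ s)
    exact ⟨0, Finset.mem_range.mpr (by omega)⟩
  show 0 ≤ Gg ρ j / Z + ρ ^ j / Z * ((Z - Gg ρ i) / Z)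
      - (Z - Gg ρ (k - 1 - j)) / Z
      - ρ ^ (k - 2 - j) / Z * (Gg ρ (k - 1 - i) / Z)
  have hZG : Z = Gg ρ (k - 1) := hZ
  have e2 : Z - Gg ρ i = ρ ^ i * Gg ρ (k - 1 - i) := by
    rw [hZG, show Gg ρ (k - 1) = Gg ρ (i + (k - 1 - i)) by congr 1; omega, Gg_add]
    ring
  have e3 : Z - Gg ρ (k - 1 - j) = ρ ^ (k - 1 - j) * Gg ρ j := by
    rw [hZG, show Gg ρ (k - 1) = Gg ρ ((k - 1 - j) + j) by congr 1; omega, Gg_add]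
    ring
  have hN : 0 ≤ Gg ρ j * Z + ρ ^ j * (Z - Gg ρ i)
      - (Z - Gg ρ (k - 1 - j)) * Z - ρ ^ (k - 2 - j) * Gg ρ (k - 1 - i) := by
    have hN' : Gg ρ j * Z + ρ ^ j * (Z - Gg ρ i)
        - (Z - Gg ρ (k - 1 - j)) * Z - ρ ^ (k - 2 - j) * Gg ρ (k - 1 - i)
        = Gg ρ j * Z * (1 - ρ ^ (k - 1 - j))
          + Gg ρ (k - 1 - i) * (ρ ^ i * ρ ^ j - ρ ^ (k - 2 - j)) := by
      rw [e2, e3]; ring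
    rw [hN']
    by_cases hcase : i + 2 * j + 2 ≤ k
    · -- easy case: i + j ≤ k - 2 - j
      have t1 : ρ ^ (k - 1 - j) ≤ 1 := pow_le_one₀ hρ.le hρ1
      have t2 : ρ ^ (k - 2 - j) ≤ ρ ^ i * ρ ^ j := by
        rw [← pow_add]
        exact pow_le_pow_of_le_one hρ.le hρ1 (by omega)
      have g1 := Gg_nonneg ρ hρ.le j
      have g2 := Gg_nonneg ρ hρ.le (k - 1 - i)
      nlinarith [mul_nonneg (mul_nonneg g1 hZ0.le) (sub_nonneg.mpr t1),
        mul_nonneg g2 (sub_nonneg.mpr t2)]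
    · -- hard case
      set m : ℕ := i + 2 * j + 2 - k with hm
      have hsplit : ρ ^ i * ρ ^ j = ρ ^ (k - 2 - j) * ρ ^ m := by
        rw [← pow_add, ← pow_add]; congr 1; omega
      have hr1 : 1 - ρ ^ (k - 1 - j) = (1 - ρ) * Gg ρ (k - 1 - j) := Gg_one_sub ρ _
      have hr2 : 1 - ρ ^ m = (1 - ρ) * Gg ρ m := Gg_one_sub ρ _
      have hbr : Gg ρ (k - 1 - i) * (ρ ^ (k - 2 - j) * Gg ρ m)
          ≤ Gg ρ j * Z * Gg ρ (k - 1 - j) := by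
        have c1 : Gg ρ (k - 1 - i) * Gg ρ m ≤ Gg ρ j * Gg ρ (j + 1) :=
          Gg_pairsum ρ hρ.le (by omega)
        have c2 : ρ ^ (k - 2 - j) ≤ Gg ρ (k - 1 - j) := by
          rw [show k - 1 - j = (k - 2 - j) + 1 by omega, Gg_succ]
          have := Gg_nonneg ρ hρ.le (k - 2 - j)
          linarith
        have c3 : Gg ρ (j + 1) ≤ Z := by
          rw [hZG]; exact Gg_mono ρ hρ.le (by omega)
        have g1 := Gg_nonneg ρ hρ.le j
        have g2 := Gg_nonneg ρ hρ.le (j + 1)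
        have g3 := Gg_nonneg ρ hρ.le (k - 1 - j)
        have p0 : (0:ℝ) ≤ ρ ^ (k - 2 - j) := pow_nonneg hρ.le _
        calc Gg ρ (k - 1 - i) * (ρ ^ (k - 2 - j) * Gg ρ m)
            = ρ ^ (k - 2 - j) * (Gg ρ (k - 1 - i) * Gg ρ m) := by ring
          _ ≤ ρ ^ (k - 2 - j) * (Gg ρ j * Gg ρ (j + 1)) :=
              mul_le_mul_of_nonneg_left c1 p0
          _ ≤ Gg ρ (k - 1 - j) * (Gg ρ j * Gg ρ (j + 1)) :=
              mul_le_mul_of_nonneg_right c2 (mul_nonneg g1 g2)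
          _ = Gg ρ j * Gg ρ (j + 1) * Gg ρ (k - 1 - j) := by ring
          _ ≤ Gg ρ j * Z * Gg ρ (k - 1 - j) := by
              have := mul_le_mul_of_nonneg_left c3 g1
              exact mul_le_mul_of_nonneg_right this g3
      have heq : Gg ρ j * Z * (1 - ρ ^ (k - 1 - j))
          + Gg ρ (k - 1 - i) * (ρ ^ i * ρ ^ j - ρ ^ (k - 2 - j))
          = (1 - ρ) * (Gg ρ j * Z * Gg ρ (k - 1 - j)
              - Gg ρ (k - 1 - i) * (ρ ^ (k - 2 - j) * Gg ρ m)) := by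
        rw [hsplit, hr1]
        have : ρ ^ (k - 2 - j) * ρ ^ m - ρ ^ (k - 2 - j)
            = -(ρ ^ (k - 2 - j) * ((1 - ρ) * Gg ρ m)) := by
          rw [← hr2]; ring
        rw [this]; ring
      rw [heq]
      exact mul_nonneg (by linarith) (by linarith)
  have hfin : Gg ρ j / Z + ρ ^ j / Z * ((Z - Gg ρ i) / Z)
      - (Z - Gg ρ (k - 1 - j)) / Z
      - ρ ^ (k - 2 - j) / Z * (Gg ρ (k - 1 - i) / Z)
      = (Gg ρ j * Z + ρ ^ j * (Z - Gg ρ i)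
          - (Z - Gg ρ (k - 1 - j)) * Z - ρ ^ (k - 2 - j) * Gg ρ (k - 1 - i)) / Z ^ 2 := by
    field_simp
  rw [hfin]
  exact div_nonneg hN (by positivity)
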